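/- arXiv:2108.01297 — 2 statements merged into one kernel-verified Lean document; each statement's English description precedes it below -/
import Mathlib

section
/- Let H, V be Hilbert spaces with V ↪ H dense and continuous, V_h ⊆ V a closed subspace, and B : V × V → ℝ bounded and coercive with coercivity constant α₀ > 0. Let θ : [0,T] → V_h be continuously differentiable with θ(0) = 0 and satisfy, for all v ∈ V_h and t ∈ [0,T], (θ'(t), v)_H + B(θ(t), v) = G(t)(v), where G(t) is a linear functional on V with |G(t)(v)| ≤ g(t)‖v‖_V for some g ∈ L²(0,T). Then sup_{t∈[0,T]} ‖θ(t)‖_H² + α₀ ∫₀ᵀ ‖θ(t)‖_V² dt ≤ C ∫₀ᵀ g(t)² dt, with C depending only on α₀. -/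
open MeasureTheory

/-- Abstract energy estimate underlying Lemma 4.1 and Theorem 5.2: for a
parabolic-type evolution in a subspace `V_h` driven by a functional `G(t)` with
`|G(t)v| ≤ g(t)‖v‖_V`, one has
`sup_t ‖θ(t)‖_H² + α₀ ∫₀ᵀ ‖θ‖_V² ≤ C ∫₀ᵀ g²` with `C = C(α₀)`. -/
theorem stmt_10 {H V : Type*} [NormedAddCommGroup H] [InnerProductSpace ℝ H]
    [NormedAddCommGroup V] [InnerProductSpace ℝ V] [CompleteSpace V]
    (j : V →L[ℝ] H) (hjdense : DenseRange j)
    (α₀ : ℝ) (hα₀ : 0 < α₀) :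
    ∃ C : ℝ, 0 < C ∧
      ∀ (B : V →ₗ[ℝ] V →ₗ[ℝ] ℝ) (M : ℝ),
        (∀ v w : V, |B v w| ≤ M * ‖v‖ * ‖w‖) →
        (∀ v : V, B v v ≥ α₀ * ‖v‖ ^ 2) →
        ∀ (Vh : Submodule ℝ V), IsClosed (Vh : Set V) →
        ∀ (T : ℝ), 0 < T →
        ∀ (θ θ' : ℝ → V) (G : ℝ → V →ₗ[ℝ] ℝ) (g : ℝ → ℝ),
          (∀ t, θ t ∈ Vh) →
          (∀ t ∈ Set.Icc 0 T, HasDerivAt θ (θ' t) t) →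
          Continuous θ' →
          θ 0 = 0 →
          (∀ t ∈ Set.Icc 0 T, ∀ v ∈ Vh,
            (inner ℝ (j (θ' t)) (j v) : ℝ) + B (θ t) v = G t v) →
          (∀ t ∈ Set.Icc 0 T, ∀ v : V, |G t v| ≤ g t * ‖v‖) →
          IntervalIntegrable (fun t => (g t) ^ 2) volume 0 T →
          ∀ t ∈ Set.Icc 0 T,
            ‖j (θ t)‖ ^ 2 + α₀ * ∫ s in (0:ℝ)..T, ‖θ s‖ ^ 2
              ≤ C * ∫ s in (0:ℝ)..T, (g s) ^ 2 := by
  refine ⟨2 / α₀, by positivity, ?_⟩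
  intro B M hM hcoer Vh hVh T hT θ θ' G g hmem hθ hθ'c h0 heq hG hgInt t ht
  have hθcont : ContinuousOn θ (Set.Icc 0 T) := fun s hs =>
    (hθ s hs).continuousAt.continuousWithinAt
  -- integrability of ‖θ‖² on subintervals of [0,T]
  have hθsqInt : ∀ τ ∈ Set.Icc (0:ℝ) T, ∀ τ' ∈ Set.Icc (0:ℝ) T,
      IntervalIntegrable (fun s => ‖θ s‖ ^ 2) volume τ τ' := by
    intro τ hτ τ' hτ'
    apply ContinuousOn.intervalIntegrable
    apply ((hθcont.mono ?_).norm.pow 2)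
    exact Set.uIcc_subset_Icc hτ hτ'
  have hgsqInt : ∀ τ ∈ Set.Icc (0:ℝ) T, ∀ τ' ∈ Set.Icc (0:ℝ) T,
      IntervalIntegrable (fun s => (g s) ^ 2) volume τ τ' := by
    intro τ hτ τ' hτ'
    refine hgInt.mono_set ?_
    exact (Set.uIcc_subset_Icc hτ hτ').trans (by rw [Set.uIcc_of_le hT.le])
  -- main energy inequality up to time τ
  have key : ∀ τ ∈ Set.Icc (0:ℝ) T,
      ‖j (θ τ)‖ ^ 2 + α₀ * ∫ s in (0:ℝ)..τ, ‖θ s‖ ^ 2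
        ≤ (1 / α₀) * ∫ s in (0:ℝ)..τ, (g s) ^ 2 := by
    intro τ hτ
    have hτ0 : (0:ℝ) ≤ τ := hτ.1
    have hsub : Set.uIcc (0:ℝ) τ ⊆ Set.Icc 0 T :=
      Set.uIcc_subset_Icc ⟨le_rfl, hT.le⟩ hτ
    -- derivative of ‖j(θ u)‖²
    have hderiv : ∀ s ∈ Set.uIcc (0:ℝ) τ,
        HasDerivAt (fun u => ‖j (θ u)‖ ^ 2)
          (2 * (inner ℝ (j (θ' s)) (j (θ s)) : ℝ)) s := by
      intro s hs
      have h1 : HasDerivAt (fun u => j (θ u)) (j (θ' s)) s :=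
        (j.hasFDerivAt).comp_hasDerivAt s (hθ s (hsub hs))
      have h2 := h1.inner ℝ h1
      have : (fun u => (inner ℝ (j (θ u)) (j (θ u)) : ℝ)) = fun u => ‖j (θ u)‖ ^ 2 := by
        funext u; exact real_inner_self_eq_norm_sq _
      rw [this] at h2
      refine h2.congr_deriv ?_
      rw [real_inner_comm (j (θ s)) (j (θ' s))]
      ring
    have hDcont : ContinuousOn (fun s => (2:ℝ) * (inner ℝ (j (θ' s)) (j (θ s)) : ℝ))
        (Set.uIcc (0:ℝ) τ) := by
      apply ContinuousOn.mul continuousOn_const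
      exact ContinuousOn.inner ((j.continuous.comp hθ'c).continuousOn)
        (j.continuous.comp_continuousOn (hθcont.mono hsub))
    have hDint : IntervalIntegrable (fun s => (2:ℝ) * (inner ℝ (j (θ' s)) (j (θ s)) : ℝ))
        volume 0 τ := hDcont.intervalIntegrable
    have hftc := intervalIntegral.integral_eq_sub_of_hasDerivAt hderiv hDint
    have h00 : ‖j (θ 0)‖ ^ 2 = 0 := by rw [h0, map_zero, norm_zero]; ring
    rw [h00, sub_zero] at hftc
    -- combine
    have hsplit : ‖j (θ τ)‖ ^ 2 + α₀ * ∫ s in (0:ℝ)..τ, ‖θ s‖ ^ 2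
        = ∫ s in (0:ℝ)..τ,
            ((2:ℝ) * (inner ℝ (j (θ' s)) (j (θ s)) : ℝ) + α₀ * ‖θ s‖ ^ 2) := by
      rw [intervalIntegral.integral_add hDint
        ((hθsqInt 0 ⟨le_rfl, hT.le⟩ τ hτ).const_mul α₀), ← hftc]
      congr 1
      exact (intervalIntegral.integral_const_mul _ _).symm
    rw [hsplit]
    have hmono : ∫ s in (0:ℝ)..τ,
          ((2:ℝ) * (inner ℝ (j (θ' s)) (j (θ s)) : ℝ) + α₀ * ‖θ s‖ ^ 2)
        ≤ ∫ s in (0:ℝ)..τ, (g s) ^ 2 / α₀ := by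
      apply intervalIntegral.integral_mono_on hτ0
      · exact hDint.add ((hθsqInt 0 ⟨le_rfl, hT.le⟩ τ hτ).const_mul α₀)
      · exact (hgsqInt 0 ⟨le_rfl, hT.le⟩ τ hτ).div_const α₀
      · intro s hs
        have hsT : s ∈ Set.Icc (0:ℝ) T := ⟨hs.1, hs.2.trans hτ.2⟩
        have he := heq s hsT (θ s) (hmem s)
        have hGb := hG s hsT (θ s)
        have hco := hcoer (θ s)
        have hinner : (inner ℝ (j (θ' s)) (j (θ s)) : ℝ) ≤ g s * ‖θ s‖ - α₀ * ‖θ s‖ ^ 2 := by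
          have : (inner ℝ (j (θ' s)) (j (θ s)) : ℝ) = G s (θ s) - B (θ s) (θ s) := by
            linarith [he]
          rw [this]
          have h1 : G s (θ s) ≤ g s * ‖θ s‖ := (abs_le.mp hGb).2
          linarith
        have hyoung : 2 * (g s * ‖θ s‖) ≤ (g s) ^ 2 / α₀ + α₀ * ‖θ s‖ ^ 2 := by
          rw [div_add' _ _ _ (ne_of_gt hα₀), le_div_iff₀ hα₀]
          nlinarith [sq_nonneg (g s - α₀ * ‖θ s‖)]
        nlinarith [hinner]
    calc _ ≤ ∫ s in (0:ℝ)..τ, (g s) ^ 2 / α₀ := hmono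
      _ = (1 / α₀) * ∫ s in (0:ℝ)..τ, (g s) ^ 2 := by
          rw [intervalIntegral.integral_div]; ring
  -- conclude
  have h0T : (0:ℝ) ∈ Set.Icc (0:ℝ) T := ⟨le_rfl, hT.le⟩
  have hTT : T ∈ Set.Icc (0:ℝ) T := ⟨hT.le, le_rfl⟩
  have hkt := key t ht
  have hkT := key T hTT
  have hA : (0:ℝ) ≤ ∫ s in (0:ℝ)..t, ‖θ s‖ ^ 2 :=
    intervalIntegral.integral_nonneg ht.1 (fun s _ => by positivity)
  have hjT : (0:ℝ) ≤ ‖j (θ T)‖ ^ 2 := by positivity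
  have hgmono : ∫ s in (0:ℝ)..t, (g s) ^ 2 ≤ ∫ s in (0:ℝ)..T, (g s) ^ 2 := by
    apply intervalIntegral.integral_mono_interval le_rfl ht.1 ht.2
    · filter_upwards with s using by positivity
    · exact hgInt
  have hα₀' : (0:ℝ) < 1 / α₀ := by positivity
  have hsplit2 : 2 / α₀ * ∫ s in (0:ℝ)..T, (g s) ^ 2
      = 1 / α₀ * (∫ s in (0:ℝ)..T, (g s) ^ 2) + 1 / α₀ * ∫ s in (0:ℝ)..T, (g s) ^ 2 := by
    ring
  rw [hsplit2]
  linarith [mul_le_mul_of_nonneg_left hgmono hα₀'.le, mul_nonneg hα₀.le hA]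
end

section
/- Let a, b ∈ L²(0,T) be nonnegative, let y : [0,T] → [0,∞) be continuous with y(0) = 0, and suppose y(t)² ≤ A h^{2q} + ∫₀ᵗ (C₁ + C₂ h^{−γ} y(s)²) y(s)² ds for all t ∈ [0,T], where A, C₁, C₂, γ > 0 and additionally ∫₀ᵀ y(s)² ds ≤ K h^{2q} with 2q > γ. Then for h sufficiently small, y(t)² ≤ C h^{2q} for all t ∈ [0,T], with C independent of h. -/
open MeasureTheory

/-- Nonlinear (quartic) Gronwall-type continuation argument used in Lemma 4.2:
from `y(t)² ≤ A h^{2q} + ∫₀ᵗ (C₁ + C₂ h^{-γ} y²) y² ds` and the a priori bound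
`∫₀ᵀ y² ≤ K h^{2q}` with `2q > γ`, conclude `y(t)² ≤ C h^{2q}` for `h` small,
with `C` independent of `h`. -/
theorem stmt_12 (A C₁ C₂ γ q K T : ℝ)
    (hA : 0 < A) (hC₁ : 0 < C₁) (hC₂ : 0 < C₂) (hγ : 0 < γ)
    (hq : γ < 2 * q) (hK : 0 < K) (hT : 0 < T) :
    ∃ C h₀ : ℝ, 0 < C ∧ 0 < h₀ ∧
      ∀ h ∈ Set.Ioo (0:ℝ) h₀, ∀ y : ℝ → ℝ,
        Continuous y → y 0 = 0 →
        (∀ t ∈ Set.Icc 0 T, 0 ≤ y t) →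
        (∀ t ∈ Set.Icc 0 T,
          (y t) ^ 2 ≤ A * h ^ (2 * q)
            + ∫ s in (0:ℝ)..t, (C₁ + C₂ * h ^ (-γ) * (y s) ^ 2) * (y s) ^ 2) →
        (∫ s in (0:ℝ)..T, (y s) ^ 2) ≤ K * h ^ (2 * q) →
        ∀ t ∈ Set.Icc 0 T, (y t) ^ 2 ≤ C * h ^ (2 * q) := by
  have he : 0 < 2 * q - γ := by linarith
  refine ⟨2 * (A + C₁ * K), min 1 ((2 * C₂ * K)⁻¹ ^ (2 * q - γ)⁻¹), by positivity, ?_, ?_⟩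
  · have : (0:ℝ) < (2 * C₂ * K)⁻¹ ^ (2 * q - γ)⁻¹ :=
      Real.rpow_pos_of_pos (by positivity) _
    exact lt_min one_pos this
  intro h hh y hy hy0 hynn hmain hL2 t ht
  have hh0 : 0 < h := hh.1
  -- absorption constant
  have hsmall : C₂ * K * h ^ (2 * q - γ) ≤ 1 / 2 := by
    have h1 : h ^ (2 * q - γ) ≤ (min 1 ((2 * C₂ * K)⁻¹ ^ (2 * q - γ)⁻¹)) ^ (2 * q - γ) :=
      Real.rpow_le_rpow hh0.le hh.2.le he.le
    have h2 : (min 1 ((2 * C₂ * K)⁻¹ ^ (2 * q - γ)⁻¹)) ^ (2 * q - γ)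
        ≤ ((2 * C₂ * K)⁻¹ ^ (2 * q - γ)⁻¹) ^ (2 * q - γ) :=
      Real.rpow_le_rpow (le_min zero_le_one (Real.rpow_pos_of_pos (by positivity) _).le)
        (min_le_right _ _) he.le
    have h3 : ((2 * C₂ * K)⁻¹ ^ (2 * q - γ)⁻¹) ^ (2 * q - γ) = (2 * C₂ * K)⁻¹ :=
      Real.rpow_inv_rpow (by positivity) he.ne'
    have h4 : h ^ (2 * q - γ) ≤ (2 * C₂ * K)⁻¹ := by
      calc h ^ (2 * q - γ) ≤ _ := h1
        _ ≤ _ := h2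
        _ = _ := h3
    calc C₂ * K * h ^ (2 * q - γ) ≤ C₂ * K * (2 * C₂ * K)⁻¹ := by
          exact mul_le_mul_of_nonneg_left h4 (by positivity)
      _ = 1 / 2 := by field_simp
  -- maximum point of y² on [0,T]
  obtain ⟨t₀, ht₀, hmax⟩ := isCompact_Icc.exists_isMaxOn (Set.nonempty_Icc.2 hT.le)
    ((hy.pow 2).continuousOn : ContinuousOn (fun s => (y s) ^ 2) (Set.Icc 0 T))
  set M := (y t₀) ^ 2 with hM
  have hM0 : 0 ≤ M := sq_nonneg _
  have hle : ∀ s ∈ Set.Icc (0:ℝ) T, (y s) ^ 2 ≤ M := fun s hs => hmax hs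
  -- bound the integral term at t₀
  have hint1 : IntervalIntegrable (fun s => (C₁ + C₂ * h ^ (-γ) * (y s) ^ 2) * (y s) ^ 2)
      volume 0 t₀ :=
    ((continuous_const.add (continuous_const.mul (hy.pow 2))).mul (hy.pow 2)).intervalIntegrable _ _
  have hint2 : IntervalIntegrable (fun s => (C₁ + C₂ * h ^ (-γ) * M) * (y s) ^ 2)
      volume 0 t₀ := (continuous_const.mul (hy.pow 2)).intervalIntegrable _ _
  have hmono : (∫ s in (0:ℝ)..t₀, (C₁ + C₂ * h ^ (-γ) * (y s) ^ 2) * (y s) ^ 2)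
      ≤ ∫ s in (0:ℝ)..t₀, (C₁ + C₂ * h ^ (-γ) * M) * (y s) ^ 2 := by
    apply intervalIntegral.integral_mono_on ht₀.1 hint1 hint2
    intro s hs
    have hsIcc : s ∈ Set.Icc (0:ℝ) T := ⟨hs.1, hs.2.trans ht₀.2⟩
    have := hle s hsIcc
    have hp : (0:ℝ) < h ^ (-γ) := Real.rpow_pos_of_pos hh0 _
    have h5 : C₂ * h ^ (-γ) * (y s) ^ 2 ≤ C₂ * h ^ (-γ) * M :=
      mul_le_mul_of_nonneg_left this (by positivity)
    exact mul_le_mul_of_nonneg_right (by linarith) (sq_nonneg _)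
  have hpullout : (∫ s in (0:ℝ)..t₀, (C₁ + C₂ * h ^ (-γ) * M) * (y s) ^ 2)
      = (C₁ + C₂ * h ^ (-γ) * M) * ∫ s in (0:ℝ)..t₀, (y s) ^ 2 := by
    rw [← intervalIntegral.integral_const_mul]
  have hextend : (∫ s in (0:ℝ)..t₀, (y s) ^ 2) ≤ ∫ s in (0:ℝ)..T, (y s) ^ 2 := by
    apply intervalIntegral.integral_mono_interval (le_refl (0:ℝ)) ht₀.1 ht₀.2
    · filter_upwards with s using sq_nonneg _
    · exact (hy.pow 2).intervalIntegrable _ _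
  have hI : (∫ s in (0:ℝ)..t₀, (y s) ^ 2) ≤ K * h ^ (2 * q) := hextend.trans hL2
  have hInn : 0 ≤ ∫ s in (0:ℝ)..t₀, (y s) ^ 2 :=
    intervalIntegral.integral_nonneg ht₀.1 fun s _ => sq_nonneg _
  have hp : (0:ℝ) < h ^ (-γ) := Real.rpow_pos_of_pos hh0 _
  have hpq : (0:ℝ) < h ^ (2 * q) := Real.rpow_pos_of_pos hh0 _
  have hrw : h ^ (-γ) * h ^ (2 * q) = h ^ (2 * q - γ) := by
    rw [← Real.rpow_add hh0]; ring_nf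
  -- main estimate at t₀
  have hMbound : M ≤ A * h ^ (2 * q) + (C₁ + C₂ * h ^ (-γ) * M) * (K * h ^ (2 * q)) := by
    have := hmain t₀ ht₀
    have hfin : (C₁ + C₂ * h ^ (-γ) * M) * (∫ s in (0:ℝ)..t₀, (y s) ^ 2)
        ≤ (C₁ + C₂ * h ^ (-γ) * M) * (K * h ^ (2 * q)) :=
      mul_le_mul_of_nonneg_left hI (by positivity)
    calc M ≤ A * h ^ (2 * q) + ∫ s in (0:ℝ)..t₀,
            (C₁ + C₂ * h ^ (-γ) * (y s) ^ 2) * (y s) ^ 2 := this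
      _ ≤ A * h ^ (2 * q) + (C₁ + C₂ * h ^ (-γ) * M) * ∫ s in (0:ℝ)..t₀, (y s) ^ 2 := by
          rw [← hpullout]; linarith
      _ ≤ _ := by linarith
  -- absorb
  have habs : C₂ * h ^ (-γ) * M * (K * h ^ (2 * q)) = (C₂ * K * h ^ (2 * q - γ)) * M := by
    rw [← hrw]; ring
  have hM2 : M ≤ A * h ^ (2 * q) + C₁ * K * h ^ (2 * q) + (1 / 2) * M := by
    have h1 : (C₂ * K * h ^ (2 * q - γ)) * M ≤ (1 / 2) * M :=
      mul_le_mul_of_nonneg_right hsmall hM0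
    nlinarith [hMbound, habs]
  have hMfinal : M ≤ 2 * (A + C₁ * K) * h ^ (2 * q) := by nlinarith
  exact (hle t ht).trans hMfinal
end
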